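/- arXiv:1708.09743 — 6 statements merged into one kernel-verified Lean document; each statement's English description precedes it below -/
import Mathlib

section
/- Let S⁺ and S⁻ be subsets of ℝ^{n+1} where every vector in S⁺ has first coordinate 1 and every vector in S⁻ has first coordinate −1. Then 0 ∈ conv(S⁺ ∪ S⁻) if and only if conv(S⁺) ∩ conv(−S⁻) ≠ ∅. -/
theorem stmt_2 (n : ℕ) (Sp Sm : Set (Fin (n + 1) → ℝ))
    (h1 : ∀ v ∈ Sp, v 0 = 1) (h2 : ∀ v ∈ Sm, v 0 = -1) :
    (0 : Fin (n + 1) → ℝ) ∈ convexHull ℝ (Sp ∪ Sm) ↔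
      (convexHull ℝ Sp ∩ convexHull ℝ (-Sm)).Nonempty := by
  have hlin : IsLinearMap ℝ (fun v : Fin (n + 1) → ℝ => v 0) :=
    ⟨fun a b => rfl, fun c a => rfl⟩
  have hp : convexHull ℝ Sp ⊆ {v | v 0 = 1} :=
    convexHull_min h1 (convex_hyperplane hlin 1)
  have hm : convexHull ℝ Sm ⊆ {v | v 0 = -1} :=
    convexHull_min h2 (convex_hyperplane hlin (-1))
  constructor
  · intro h0
    -- Sp and Sm must be nonempty
    rcases Set.eq_empty_or_nonempty Sp with hSp | hSp
    · rw [hSp, Set.empty_union] at h0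
      have := hm h0
      norm_num at this
    rcases Set.eq_empty_or_nonempty Sm with hSm | hSm
    · rw [hSm, Set.union_empty] at h0
      have := hp h0
      norm_num at this
    rw [convexHull_union hSp hSm, mem_convexJoin] at h0
    obtain ⟨x, hx, y, hy, hseg⟩ := h0
    obtain ⟨a, b, ha, hb, hab, hxy⟩ := hseg
    have hx0 : x 0 = 1 := hp hx
    have hy0 : y 0 = -1 := hm hy
    have h0' : a * x 0 + b * y 0 = 0 := congrFun hxy 0
    rw [hx0, hy0] at h0'
    have hab2 : a = b := by linarith
    have ha2 : a = 1 / 2 := by linarith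
    have hb2 : b = 1 / 2 := by linarith
    refine ⟨x, hx, ?_⟩
    rw [convexHull_neg, Set.mem_neg]
    have : x = -y := by
      funext i
      have := congrFun hxy i
      simp only [Pi.add_apply, Pi.smul_apply, Pi.zero_apply, smul_eq_mul] at this
      rw [ha2, hb2] at this
      simp only [Pi.neg_apply]
      linarith
    rw [this, neg_neg]
    exact hy
  · rintro ⟨x, hxp, hxm⟩
    rw [convexHull_neg, Set.mem_neg] at hxm
    set y := -x with hy'
    have hy : y ∈ convexHull ℝ Sm := hxm
    have hx : x = -y := by simp [hy']
    have hxP : x ∈ convexHull ℝ (Sp ∪ Sm) :=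
      convexHull_mono Set.subset_union_left hxp
    have hyP : y ∈ convexHull ℝ (Sp ∪ Sm) :=
      convexHull_mono Set.subset_union_right hy
    have := (convex_convexHull ℝ (Sp ∪ Sm)) hxP hyP (by norm_num : (0:ℝ) ≤ 1/2)
      (by norm_num : (0:ℝ) ≤ 1/2) (by norm_num)
    convert this using 1
    funext i
    simp only [Pi.add_apply, Pi.smul_apply, Pi.zero_apply, smul_eq_mul]
    have : x i = -y i := by rw [hx]; rfl
    linarith
end

section
/- Let Q be a nonempty finite subset of ℝ^d, f : Q → ℝ, and g_1,…,g_n : Q → ℝ. Suppose A* = (a_0*,…,a_n*) ∈ ℝ^{n+1}. Define E⁺ = {x ∈ Q : L(A*,x) − f(x) = max_{y∈Q}|f(y) − L(A*,y)|} and E⁻ = {x ∈ Q : f(x) − L(A*,x) = max_{y∈Q}|f(y) − L(A*,y)|}, where L(A,x) = a_0 + ∑ a_i g_i(x). If the convex hulls of G⁺ = {(1,g_1(x),…,g_n(x)) : x ∈ E⁺} and G⁻ = {(1,g_1(x),…,g_n(x)) : x ∈ E⁻} intersect, then A* minimises A ↦ max_{x∈Q} |f(x) − L(A,x)| over ℝ^{n+1}.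 -/
theorem stmt_4 (d n : ℕ) (Q : Finset (Fin d → ℝ)) (hQ : Q.Nonempty)
    (f : (Fin d → ℝ) → ℝ) (g : Fin n → (Fin d → ℝ) → ℝ)
    (L : (Fin (n + 1) → ℝ) → (Fin d → ℝ) → ℝ)
    (hL : ∀ A x, L A x = A 0 + ∑ i : Fin n, A i.succ * g i x)
    (Astar : Fin (n + 1) → ℝ)
    (M : ℝ) (hM : M = Q.sup' hQ fun x => |f x - L Astar x|)
    (hint : ((convexHull ℝ {v : Fin (n + 1) → ℝ | ∃ x ∈ Q,
        L Astar x - f x = M ∧ v = Fin.cons 1 fun i => g i x}) ∩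
      (convexHull ℝ {v : Fin (n + 1) → ℝ | ∃ x ∈ Q,
        f x - L Astar x = M ∧ v = Fin.cons 1 fun i => g i x})).Nonempty) :
    ∀ A : Fin (n + 1) → ℝ,
      Q.sup' hQ (fun x => |f x - L Astar x|) ≤ Q.sup' hQ fun x => |f x - L A x| := by
  intro A
  rw [← hM]
  by_contra hcon
  push_neg at hcon
  rw [Finset.sup'_lt_iff] at hcon
  obtain ⟨u, huP, huN⟩ := hint
  set c : Fin (n + 1) → ℝ := fun i => A i - Astar i with hc
  set φ : (Fin (n + 1) → ℝ) → ℝ := fun w => ∑ i, c i * w i with hφ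
  have hlin : IsLinearMap ℝ φ := by
    constructor
    · intro w₁ w₂
      simp [hφ, mul_add, Finset.sum_add_distrib]
    · intro s w
      simp only [hφ, smul_eq_mul, Pi.smul_apply]
      rw [Finset.mul_sum]
      exact Finset.sum_congr rfl fun i _ => by ring
  -- key: φ (cons 1 (g · x)) = L A x - L Astar x
  have hkey : ∀ x : Fin d → ℝ, φ (Fin.cons 1 fun i => g i x) = L A x - L Astar x := by
    intro x
    rw [hL, hL, hφ]
    simp only [Fin.sum_univ_succ, Fin.cons_zero, Fin.cons_succ, hc, mul_one]
    have hsum : ∑ i : Fin n, (A i.succ - Astar i.succ) * g i x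
        = ∑ i : Fin n, A i.succ * g i x - ∑ i : Fin n, Astar i.succ * g i x := by
      rw [← Finset.sum_sub_distrib]
      exact Finset.sum_congr rfl fun i _ => by ring
    rw [hsum]
    ring
  have hpos : φ u < 0 := by
    refine convexHull_min ?_ (convex_halfSpace_lt hlin 0) huP
    rintro w ⟨x, hx, hxe, rfl⟩
    simp only [Set.mem_setOf_eq]
    rw [hkey]
    have h1 := hcon x hx
    have h2 := abs_lt.mp h1
    linarith [h2.1, h2.2]
  have hneg : 0 < φ u := by
    refine convexHull_min ?_ (convex_halfSpace_gt hlin 0) huN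
    rintro w ⟨x, hx, hxe, rfl⟩
    simp only [Set.mem_setOf_eq]
    rw [hkey]
    have h1 := hcon x hx
    have h2 := abs_lt.mp h1
    linarith [h2.1, h2.2]
  linarith
end

section
/- Let Q be a nonempty finite subset of ℝ^d, f : Q → ℝ, g_1,…,g_n : Q → ℝ, and L(A,x) = a_0 + ∑_{i=1}^n a_i g_i(x). Suppose A* minimises A ↦ max_{x∈Q}|f(x) − L(A,x)| over ℝ^{n+1} and the minimum value is positive. Then, with E⁺ and E⁻ the sets of maximal positive and negative deviation points, conv{(1,g_1(x),…,g_n(x)) : x ∈ E⁺} ∩ conv{(1,g_1(x),…,g_n(x)) : x ∈ E⁻} ≠ ∅; in particular both E⁺ and E⁻ are nonempty. -/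
open scoped Classical

theorem stmt_5 (d n : ℕ) (Q : Finset (Fin d → ℝ)) (hQ : Q.Nonempty)
    (f : (Fin d → ℝ) → ℝ) (g : Fin n → (Fin d → ℝ) → ℝ)
    (L : (Fin (n + 1) → ℝ) → (Fin d → ℝ) → ℝ)
    (hL : ∀ A x, L A x = A 0 + ∑ i : Fin n, A i.succ * g i x)
    (Astar : Fin (n + 1) → ℝ)
    (M : ℝ) (hM : M = Q.sup' hQ fun x => |f x - L Astar x|)
    (hmin : ∀ A : Fin (n + 1) → ℝ, M ≤ Q.sup' hQ fun x => |f x - L A x|)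
    (hpos : 0 < M)
    (Ep Em : Set (Fin d → ℝ))
    (hEp : Ep = {x | x ∈ Q ∧ L Astar x - f x = M})
    (hEm : Em = {x | x ∈ Q ∧ f x - L Astar x = M}) :
    ((convexHull ℝ {v : Fin (n + 1) → ℝ | ∃ x ∈ Ep, v = Fin.cons 1 fun i => g i x}) ∩
      (convexHull ℝ {v : Fin (n + 1) → ℝ | ∃ x ∈ Em,
        v = Fin.cons 1 fun i => g i x})).Nonempty ∧
    Ep.Nonempty ∧ Em.Nonempty := by
  set vmap : (Fin d → ℝ) → (Fin (n + 1) → ℝ) := fun x => Fin.cons 1 fun i => g i x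
    with hvmap
  have hLsum : ∀ A x, L A x = ∑ j, A j * vmap x j := by
    intro A x
    rw [hL, Fin.sum_univ_succ]
    simp [hvmap]
  have contra : ∀ A : Fin (n + 1) → ℝ, (∀ x ∈ Q, |f x - L A x| < M) → False := by
    intro A h
    have h1 := hmin A
    have h2 : Q.sup' hQ (fun x => |f x - L A x|) < M := (Finset.sup'_lt_iff hQ).mpr h
    linarith
  have ebound : ∀ x ∈ Q, |f x - L Astar x| ≤ M := by
    intro x hx; rw [hM]; exact Finset.le_sup' (fun x => |f x - L Astar x|) hx
  -- Ep is nonempty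
  have hEpne : Ep.Nonempty := by
    by_contra hne
    have hne' : ∀ x ∈ Q, L Astar x - f x ≠ M := by
      intro x hx hcon
      exact hne ⟨x, by rw [hEp]; exact ⟨hx, hcon⟩⟩
    have hstrict : ∀ x ∈ Q, -M < f x - L Astar x := by
      intro x hx
      rcases lt_or_eq_of_le (neg_le_of_abs_le (ebound x hx)) with h | h
      · exact h
      · exact absurd (by linarith) (hne' x hx)
    set m0 := Q.inf' hQ (fun x => f x - L Astar x) with hm0
    have hm0lt : -M < m0 := by
      obtain ⟨x, hx, hx2⟩ := Finset.exists_mem_eq_inf' hQ (fun x => f x - L Astar x)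
      rw [hm0, hx2]; exact hstrict x hx
    set δ := (m0 + M) / 2 with hδ
    have hδpos : 0 < δ := by rw [hδ]; linarith
    set A' := Function.update Astar 0 (Astar 0 + δ) with hA'
    have hLA' : ∀ x, L A' x = L Astar x + δ := by
      intro x
      rw [hL, hL]
      have h0 : A' 0 = Astar 0 + δ := by simp [hA']
      have hs : ∀ i : Fin n, A' i.succ = Astar i.succ := by
        intro i
        simp [hA', Function.update_apply, Fin.succ_ne_zero i]
      rw [h0, Finset.sum_congr rfl (fun i _ => by rw [hs i])]
      ring
    apply contra A'
    intro x hx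
    have h1 : f x - L A' x = (f x - L Astar x) - δ := by rw [hLA' x]; ring
    have h2 : f x - L Astar x ≤ M := le_of_abs_le (ebound x hx)
    have h3 : m0 ≤ f x - L Astar x := Finset.inf'_le _ hx
    rw [h1, abs_lt]
    constructor <;> linarith
  -- Em is nonempty
  have hEmne : Em.Nonempty := by
    by_contra hne
    have hne' : ∀ x ∈ Q, f x - L Astar x ≠ M := by
      intro x hx hcon
      exact hne ⟨x, by rw [hEm]; exact ⟨hx, hcon⟩⟩
    have hstrict : ∀ x ∈ Q, f x - L Astar x < M := by
      intro x hx
      rcases lt_or_eq_of_le (le_of_abs_le (ebound x hx)) with h | h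
      · exact h
      · exact absurd h (hne' x hx)
    set M1 := Q.sup' hQ (fun x => f x - L Astar x) with hM1
    have hM1lt : M1 < M := by
      obtain ⟨x, hx, hx2⟩ := Finset.exists_mem_eq_sup' hQ (fun x => f x - L Astar x)
      rw [hM1, hx2]; exact hstrict x hx
    set δ := (M - M1) / 2 with hδ
    have hδpos : 0 < δ := by rw [hδ]; linarith
    set A' := Function.update Astar 0 (Astar 0 - δ) with hA'
    have hLA' : ∀ x, L A' x = L Astar x - δ := by
      intro x
      rw [hL, hL]
      have h0 : A' 0 = Astar 0 - δ := by simp [hA']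
      have hs : ∀ i : Fin n, A' i.succ = Astar i.succ := by
        intro i
        simp [hA', Function.update_apply, Fin.succ_ne_zero i]
      rw [h0, Finset.sum_congr rfl (fun i _ => by rw [hs i])]
      ring
    apply contra A'
    intro x hx
    have h1 : f x - L A' x = (f x - L Astar x) + δ := by rw [hLA' x]; ring
    have h2 : -M ≤ f x - L Astar x := neg_le_of_abs_le (ebound x hx)
    have h3 : f x - L Astar x ≤ M1 := Finset.le_sup' (fun x => f x - L Astar x) hx
    rw [h1, abs_lt]
    constructor <;> linarith
  refine ⟨?_, hEpne, hEmne⟩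
  -- main claim: convex hulls intersect
  have hset : ∀ E : Set (Fin d → ℝ),
      {v : Fin (n + 1) → ℝ | ∃ x ∈ E, v = Fin.cons 1 fun i => g i x} = vmap '' E := by
    intro E
    ext v
    simp only [Set.mem_setOf_eq, Set.mem_image, hvmap]
    exact ⟨fun ⟨x, hx, h⟩ => ⟨x, hx, h.symm⟩, fun ⟨x, hx, h⟩ => ⟨x, hx, h.symm⟩⟩
  rw [hset, hset]
  by_contra hcon
  rw [Set.not_nonempty_iff_eq_empty] at hcon
  have hdisj : Disjoint (convexHull ℝ (vmap '' Ep)) (convexHull ℝ (vmap '' Em)) :=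
    Set.disjoint_iff_inter_eq_empty.mpr hcon
  have hEpQ : Ep ⊆ ↑Q := by rw [hEp]; intro x hx; exact hx.1
  have hEmQ : Em ⊆ ↑Q := by rw [hEm]; intro x hx; exact hx.1
  have hfinp : (vmap '' Ep).Finite := (Q.finite_toSet.subset hEpQ).image vmap
  have hfinm : (vmap '' Em).Finite := (Q.finite_toSet.subset hEmQ).image vmap
  obtain ⟨φ, u, u', hup, huu', hlow⟩ :=
    geometric_hahn_banach_compact_closed (convex_convexHull ℝ _)
      (hfinp.isCompact_convexHull (𝕜 := ℝ)) (convex_convexHull ℝ _)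
      (hfinm.isCompact_convexHull (𝕜 := ℝ)).isClosed hdisj
  set c : Fin (n + 1) → ℝ := fun j => φ ((Pi.single j 1 : Fin (n + 1) → ℝ)) with hc
  have hφ : ∀ v : Fin (n + 1) → ℝ, φ v = ∑ j, v j * c j := by
    intro v
    conv_lhs => rw [← Finset.univ_sum_single v]
    rw [map_sum]
    refine Finset.sum_congr rfl fun j _ => ?_
    have h1 : Pi.single j (v j) = v j • (Pi.single j 1 : Fin (n + 1) → ℝ) := by
      funext k
      simp [Pi.single_apply, mul_ite]
    rw [h1, map_smul, hc, smul_eq_mul]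
  set s := (u + u') / 2 with hs
  set B : Fin (n + 1) → ℝ := fun j => c j - (if j = 0 then s else 0) with hB
  have hBsum : ∀ x, (∑ j, B j * vmap x j) = φ (vmap x) - s := by
    intro x
    rw [hφ, Fin.sum_univ_succ, Fin.sum_univ_succ]
    have h1 : ∀ i : Fin n, B i.succ * vmap x i.succ = vmap x i.succ * c i.succ := by
      intro i; simp [hB, Fin.succ_ne_zero i]; ring
    rw [Finset.sum_congr rfl fun i _ => h1 i]
    simp only [hB, hvmap, Fin.cons_zero, if_pos rfl, eq_self_iff_true, if_true]
    ring
  have hLpert : ∀ (t : ℝ) x, L (Astar + t • B) x = L Astar x + t * (φ (vmap x) - s) := by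
    intro t x
    rw [hLsum, hLsum, ← hBsum x]
    simp only [Pi.add_apply, Pi.smul_apply, smul_eq_mul]
    rw [Finset.mul_sum, ← Finset.sum_add_distrib]
    exact Finset.sum_congr rfl fun j _ => by ring
  have hup' : ∀ x ∈ Ep, φ (vmap x) < u := fun x hx =>
    hup _ (subset_convexHull ℝ _ ⟨x, hx, rfl⟩)
  have hlow' : ∀ x ∈ Em, u' < φ (vmap x) := fun x hx =>
    hlow _ (subset_convexHull ℝ _ ⟨x, hx, rfl⟩)
  set w : (Fin d → ℝ) → ℝ := fun x => |φ (vmap x) - s| with hw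
  set r : (Fin d → ℝ) → ℝ := fun x => if x ∈ Ep ∪ Em then -M else |f x - L Astar x| with hr
  have hrlt : ∀ x ∈ Q, r x < M := by
    intro x hx
    by_cases h : x ∈ Ep ∪ Em
    · simp only [hr, h, if_true]; linarith
    · simp only [hr, h, if_false]
      rcases lt_or_eq_of_le (ebound x hx) with h1 | h1
      · exact h1
      · exfalso
        rcases abs_eq (le_of_lt hpos) |>.mp h1 with h2 | h2
        · exact h (Or.inr (by rw [hEm]; exact ⟨hx, h2⟩))
        · exact h (Or.inl (by rw [hEp]; exact ⟨hx, by linarith⟩))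
  have hwpos : ∀ x, (0 : ℝ) < w x + 1 := by
    intro x; have := abs_nonneg (φ (vmap x) - s); simp only [hw]; linarith
  set τ : (Fin d → ℝ) → ℝ := fun x => (M - r x) / (w x + 1) with hτ
  have hτpos : ∀ x ∈ Q, 0 < τ x := by
    intro x hx
    exact div_pos (by linarith [hrlt x hx]) (hwpos x)
  set t := Q.inf' hQ τ / 2 with ht
  have htpos : 0 < t := by
    have : 0 < Q.inf' hQ τ := (Finset.lt_inf'_iff hQ).mpr hτpos
    rw [ht]; linarith
  have hkey : ∀ x ∈ Q, t * (w x + 1) < M - r x := by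
    intro x hx
    have h1 : Q.inf' hQ τ ≤ τ x := Finset.inf'_le _ hx
    have h2 : t < τ x := by
      have := hτpos x hx; rw [ht]; linarith
    calc t * (w x + 1) < τ x * (w x + 1) :=
          mul_lt_mul_of_pos_right h2 (hwpos x)
      _ = M - r x := div_mul_cancel₀ _ (ne_of_gt (hwpos x))
  apply contra (Astar + t • B)
  intro x hx
  have hdev : f x - L (Astar + t • B) x = (f x - L Astar x) - t * (φ (vmap x) - s) := by
    rw [hLpert]; ring
  by_cases hxp : x ∈ Ep
  · have he : f x - L Astar x = -M := by
      rw [hEp] at hxp; linarith [hxp.2]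
    have hp : φ (vmap x) - s < 0 := by
      have := hup' x hxp; rw [hs]; linarith
    have hwx : w x = -(φ (vmap x) - s) := abs_of_neg hp
    have hkx := hkey x hx
    have hrx : r x = -M := by simp [hr, hxp]
    rw [hrx] at hkx
    rw [hdev, he, abs_lt]
    constructor <;> nlinarith
  · by_cases hxm : x ∈ Em
    · have he : f x - L Astar x = M := by
        rw [hEm] at hxm; exact hxm.2
      have hp : 0 < φ (vmap x) - s := by
        have := hlow' x hxm; rw [hs]; linarith
      have hwx : w x = φ (vmap x) - s := abs_of_pos hp
      have hkx := hkey x hx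
      have hrx : r x = -M := by simp [hr, hxm]
      rw [hrx] at hkx
      rw [hdev, he, abs_lt]
      constructor <;> nlinarith
    · have hrx : r x = |f x - L Astar x| := by
        simp [hr, hxp, hxm]
      have hkx := hkey x hx
      rw [hrx] at hkx
      have h1 : |(f x - L Astar x) - t * (φ (vmap x) - s)| ≤
          |f x - L Astar x| + |t * (φ (vmap x) - s)| := abs_sub _ _
      have h2 : |t * (φ (vmap x) - s)| = t * w x := by
        rw [abs_mul, abs_of_pos htpos, hw]
      rw [hdev]
      calc |(f x - L Astar x) - t * (φ (vmap x) - s)|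
          ≤ |f x - L Astar x| + t * w x := by rw [← h2]; exact h1
        _ < M := by nlinarith
end

section
/- Let E⁺, E⁻ be finite subsets of ℝ^d, m ≥ 1, and suppose there are α_x ≥ 0, not all zero on each side, with ∑_{E⁺} α_x = ∑_{E⁻} α_x = 1 and ∑_{x∈E⁺} α_x x^e = ∑_{x∈E⁻} α_x x^e for all |e| ≤ m. Let u ∈ ℝ^d, a ∈ ℝ, σ(x) = ⟨u,x⟩ − a, and define Ẽ⁺ = {x ∈ E⁺ : σ(x) > 0} ∪ {x ∈ E⁻ : σ(x) < 0} and Ẽ⁻ = {x ∈ E⁻ : σ(x) > 0} ∪ {x ∈ E⁺ : σ(x) < 0}. If A⁺ = ∑_{x∈Ẽ⁺} α_x|σ(x)| > 0 and A⁻ = ∑_{x∈Ẽ⁻} α_x|σ(x)| > 0, then setting α̂_x = α_x|σ(x)|/A⁺ for x ∈ Ẽ⁺ and α̂_x = α_x|σ(x)|/A⁻ for x ∈ Ẽ⁻, one has ∑_{x∈Ẽ⁺} α̂_x = ∑_{x∈Ẽ⁻} α̂_x = 1 and ∑_{x∈Ẽ⁺} α̂_x x^e = ∑_{x∈Ẽ⁻}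 α̂_x x^e for all |e| ≤ m−1, provided A⁺ = A⁻. -/
open scoped Classical in
theorem stmt_10 (d m : ℕ) (hm : 1 ≤ m) (Ep Em : Finset (Fin d → ℝ))
    (α : (Fin d → ℝ) → ℝ) (hα : ∀ x ∈ Ep ∪ Em, 0 ≤ α x)
    (hnzp : ∃ x ∈ Ep, α x ≠ 0) (hnzm : ∃ x ∈ Em, α x ≠ 0)
    (hαp : ∑ x ∈ Ep, α x = 1) (hαm : ∑ x ∈ Em, α x = 1)
    (hmom : ∀ e : Fin d → ℕ, ∑ i, e i ≤ m →
      ∑ x ∈ Ep, α x * ∏ i, x i ^ e i = ∑ x ∈ Em, α x * ∏ i, x i ^ e i)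
    (u : Fin d → ℝ) (a : ℝ) (σ : (Fin d → ℝ) → ℝ)
    (hσ : ∀ x, σ x = (∑ i, u i * x i) - a)
    (Etp Etm : Finset (Fin d → ℝ))
    (hEtp : Etp = Ep.filter (fun x => 0 < σ x) ∪ Em.filter (fun x => σ x < 0))
    (hEtm : Etm = Em.filter (fun x => 0 < σ x) ∪ Ep.filter (fun x => σ x < 0))
    (Ap Am : ℝ)
    (hAp : Ap = ∑ x ∈ Etp, α x * |σ x|) (hAm : Am = ∑ x ∈ Etm, α x * |σ x|)
    (hApos : 0 < Ap) (hAmpos : 0 < Am) (hAeq : Ap = Am) :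
    (∑ x ∈ Etp, α x * |σ x| / Ap = 1) ∧
    (∑ x ∈ Etm, α x * |σ x| / Am = 1) ∧
    ∀ e : Fin d → ℕ, ∑ i, e i ≤ m - 1 →
      ∑ x ∈ Etp, (α x * |σ x| / Ap) * ∏ i, x i ^ e i =
        ∑ x ∈ Etm, (α x * |σ x| / Am) * ∏ i, x i ^ e i := by
  have hApAm : ∀ e : Fin d → ℕ, ∑ i, e i ≤ m - 1 →
      ∑ x ∈ Etp, α x * |σ x| * ∏ i, x i ^ e i =
      ∑ x ∈ Etm, α x * |σ x| * ∏ i, x i ^ e i := by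
    intro e he
    -- key: ∑ over Ep of α σ x^e equals ∑ over Em
    have hx : ∀ (x : Fin d → ℝ) (i : Fin d),
        (∏ j, x j ^ (e j + (Pi.single i 1 : Fin d → ℕ) j)) = x i * ∏ j, x j ^ e j := by
      intro x i
      simp only [pow_add, Finset.prod_mul_distrib]
      rw [mul_comm]
      congr 1
      have : (∏ j, x j ^ ((Pi.single i 1 : Fin d → ℕ) j)) = ∏ j, (if j = i then x j else 1) := by
        apply Finset.prod_congr rfl
        intro j _
        rcases eq_or_ne j i with h | h <;> simp [h, Pi.single_apply]
      rw [this, Finset.prod_ite_eq' Finset.univ i (fun j => x j)]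
      simp
    have expand : ∀ E : Finset (Fin d → ℝ),
        ∑ x ∈ E, α x * σ x * ∏ i, x i ^ e i =
        (∑ i, u i * ∑ x ∈ E, α x * ∏ j, x j ^ (e j + (Pi.single i 1 : Fin d → ℕ) j))
          - a * ∑ x ∈ E, α x * ∏ i, x i ^ e i := by
      intro E
      have step : ∀ x ∈ E, α x * σ x * ∏ i, x i ^ e i =
          (∑ i, u i * (α x * ∏ j, x j ^ (e j + (Pi.single i 1 : Fin d → ℕ) j)))
            - a * (α x * ∏ i, x i ^ e i) := by
        intro x _
        have h3 : ∀ i : Fin d, u i * (α x * ∏ j, x j ^ (e j + (Pi.single i 1 : Fin d → ℕ) j))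
            = u i * x i * (α x * ∏ j, x j ^ e j) := by
          intro i; rw [hx]; ring
        rw [Finset.sum_congr rfl fun i _ => h3 i, ← Finset.sum_mul, hσ x]
        ring
      rw [Finset.sum_congr rfl step, Finset.sum_sub_distrib, Finset.sum_comm, ← Finset.mul_sum]
      congr 1
      exact Finset.sum_congr rfl fun i _ => (Finset.mul_sum _ _ _).symm
    have key : ∑ x ∈ Ep, α x * σ x * ∏ i, x i ^ e i =
        ∑ x ∈ Em, α x * σ x * ∏ i, x i ^ e i := by
      rw [expand Ep, expand Em]
      have h1 : ∑ x ∈ Ep, α x * ∏ i, x i ^ e i = ∑ x ∈ Em, α x * ∏ i, x i ^ e i :=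
        hmom e (le_trans he (Nat.sub_le m 1))
      have h2 : ∀ i : Fin d, ∑ x ∈ Ep, α x * ∏ j, x j ^ (e j + (Pi.single i 1 : Fin d → ℕ) j)
          = ∑ x ∈ Em, α x * ∏ j, x j ^ (e j + (Pi.single i 1 : Fin d → ℕ) j) := by
        intro i
        apply hmom
        have : ∑ j, (e j + (Pi.single i 1 : Fin d → ℕ) j) = (∑ j, e j) + 1 := by
          rw [Finset.sum_add_distrib]
          simp
        rw [this]
        omega
      rw [h1]
      congr 1
      exact Finset.sum_congr rfl fun i _ => by rw [h2 i]
    -- split sums over E into positive and negative parts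
    have split : ∀ E : Finset (Fin d → ℝ),
        ∑ x ∈ E.filter (fun x => 0 < σ x), α x * σ x * ∏ i, x i ^ e i +
        ∑ x ∈ E.filter (fun x => σ x < 0), α x * σ x * ∏ i, x i ^ e i =
        ∑ x ∈ E, α x * σ x * ∏ i, x i ^ e i := by
      intro E
      rw [Finset.sum_filter, Finset.sum_filter, ← Finset.sum_add_distrib]
      apply Finset.sum_congr rfl
      intro x _
      rcases lt_trichotomy (σ x) 0 with h | h | h
      · simp [h, not_lt.mpr h.le]
      · simp [h]
      · simp [h, not_lt.mpr h.le]
    have habs_pos : ∀ (E : Finset (Fin d → ℝ)),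
        ∑ x ∈ E.filter (fun x => 0 < σ x), α x * |σ x| * ∏ i, x i ^ e i =
        ∑ x ∈ E.filter (fun x => 0 < σ x), α x * σ x * ∏ i, x i ^ e i := by
      intro E
      apply Finset.sum_congr rfl
      intro x hxm
      rw [abs_of_pos (Finset.mem_filter.mp hxm).2]
    have habs_neg : ∀ (E : Finset (Fin d → ℝ)),
        ∑ x ∈ E.filter (fun x => σ x < 0), α x * |σ x| * ∏ i, x i ^ e i =
        - ∑ x ∈ E.filter (fun x => σ x < 0), α x * σ x * ∏ i, x i ^ e i := by
      intro E
      rw [← Finset.sum_neg_distrib]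
      apply Finset.sum_congr rfl
      intro x hxm
      rw [abs_of_neg (Finset.mem_filter.mp hxm).2]
      ring
    have hdisj : ∀ (E F : Finset (Fin d → ℝ)),
        Disjoint (E.filter (fun x => 0 < σ x)) (F.filter (fun x => σ x < 0)) := by
      intro E F
      rw [Finset.disjoint_left]
      intro x h1 h2
      have := (Finset.mem_filter.mp h1).2
      have := (Finset.mem_filter.mp h2).2
      linarith
    rw [hEtp, hEtm, Finset.sum_union (hdisj Ep Em), Finset.sum_union (hdisj Em Ep),
      habs_pos, habs_pos, habs_neg, habs_neg]
    have sp := split Ep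
    have sm := split Em
    linarith [key]
  have hApne : Ap ≠ 0 := ne_of_gt hApos
  have hAmne : Am ≠ 0 := ne_of_gt hAmpos
  refine ⟨?_, ?_, ?_⟩
  · rw [← Finset.sum_div, ← hAp, div_self hApne]
  · rw [← Finset.sum_div, ← hAm, div_self hAmne]
  · intro e he
    have := hApAm e he
    rw [hAeq]
    calc ∑ x ∈ Etp, (α x * |σ x| / Am) * ∏ i, x i ^ e i
        = (∑ x ∈ Etp, α x * |σ x| * ∏ i, x i ^ e i) / Am := by
          rw [Finset.sum_div]; exact Finset.sum_congr rfl fun x _ => by ring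
      _ = (∑ x ∈ Etm, α x * |σ x| * ∏ i, x i ^ e i) / Am := by rw [this]
      _ = ∑ x ∈ Etm, (α x * |σ x| / Am) * ∏ i, x i ^ e i := by
          rw [Finset.sum_div]; exact Finset.sum_congr rfl fun x _ => by ring
end

section
/- Let E⁺, E⁻ be finite subsets of ℝ^d satisfying the degree-m moment intersection condition: there exist α_x ≥ 0 with ∑_{E⁺} α_x = ∑_{E⁻} α_x = 1 and ∑_{x∈E⁺} α_x x^e = ∑_{x∈E⁻} α_x x^e for all |e| ≤ m, with all α_x > 0. If a hyperplane H = {x : ⟨u,x⟩ = a} contains all points of E⁺ ∪ E⁻ except possibly points on one side, and exactly the points of (E⁺ ∪ E⁻) ∩ H are removed, then either all remaining coefficients vanish on one side, or the sign-adjusted reduced sets satisfy the degree-(m−1) moment intersection condition. -/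
open scoped Classical in
theorem helper_17 (d m : ℕ) (hm : 1 ≤ m) (Ep Em : Finset (Fin d → ℝ))
    (α : (Fin d → ℝ) → ℝ) (hαpos : ∀ x ∈ Ep ∪ Em, 0 < α x)
    (hmom : ∀ e : Fin d → ℕ, ∑ i, e i ≤ m →
      ∑ x ∈ Ep, α x * ∏ i, x i ^ e i = ∑ x ∈ Em, α x * ∏ i, x i ^ e i)
    (u : Fin d → ℝ) (a : ℝ) (σ : (Fin d → ℝ) → ℝ)
    (hσ : ∀ x, σ x = (∑ i, u i * x i) - a)
    (hpos : ∀ x ∈ Ep ∪ Em, 0 ≤ σ x)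
    (Etp Etm : Finset (Fin d → ℝ))
    (hEtp : Etp = Ep.filter (fun x => 0 < σ x))
    (hEtm : Etm = Em.filter (fun x => 0 < σ x)) :
    (Etp = ∅ ∨ Etm = ∅) ∨
      ∃ β : (Fin d → ℝ) → ℝ, (∀ x ∈ Etp ∪ Etm, 0 ≤ β x) ∧
        (∑ x ∈ Etp, β x = 1) ∧ (∑ x ∈ Etm, β x = 1) ∧
        ∀ e : Fin d → ℕ, ∑ i, e i ≤ m - 1 →
          ∑ x ∈ Etp, β x * ∏ i, x i ^ e i = ∑ x ∈ Etm, β x * ∏ i, x i ^ e i := by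
  -- key moment identity for γ = α·σ
  have key : ∀ e : Fin d → ℕ, (∑ i, e i) ≤ m - 1 →
      ∑ x ∈ Ep, α x * σ x * ∏ i, x i ^ e i = ∑ x ∈ Em, α x * σ x * ∏ i, x i ^ e i := by
    intro e he
    have expand : ∀ E : Finset (Fin d → ℝ),
        ∑ x ∈ E, α x * σ x * ∏ i, x i ^ e i
        = (∑ i, u i * ∑ x ∈ E, α x * ∏ j, x j ^ (Function.update e i (e i + 1)) j)
          - a * ∑ x ∈ E, α x * ∏ i, x i ^ e i := by
      intro E
      simp_rw [Finset.mul_sum]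
      rw [Finset.sum_comm, ← Finset.sum_sub_distrib]
      apply Finset.sum_congr rfl
      intro x _
      have hprod : ∀ i : Fin d, ∏ j, x j ^ (Function.update e i (e i + 1)) j
          = x i * ∏ j, x j ^ e j := by
        intro i
        have h1 : (fun j => x j ^ (Function.update e i (e i + 1)) j)
            = Function.update (fun j => x j ^ e j) i (x i ^ (e i + 1)) := by
          ext j
          by_cases h : j = i
          · subst h; simp
          · simp [Function.update_of_ne h]
        rw [h1, Finset.prod_update_of_mem (Finset.mem_univ i),
          ← Finset.mul_prod_erase Finset.univ (fun j => x j ^ e j) (Finset.mem_univ i),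
          pow_succ, Finset.erase_eq]
        ring
      simp_rw [hprod]
      have hsum : ∑ i, u i * (α x * (x i * ∏ j, x j ^ e j))
          = (∑ i, u i * x i) * (α x * ∏ j, x j ^ e j) := by
        rw [Finset.sum_mul]
        apply Finset.sum_congr rfl
        intro i _
        ring
      rw [hsum, hσ x]
      ring
    rw [expand Ep, expand Em, hmom e (by omega)]
    congr 1
    apply Finset.sum_congr rfl
    intro i _
    congr 1
    apply hmom
    have : ∑ j, (Function.update e i (e i + 1)) j = (∑ j, e j) + 1 := by
      rw [Finset.sum_update_of_mem (Finset.mem_univ i),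
        ← Finset.add_sum_erase Finset.univ e (Finset.mem_univ i), Finset.erase_eq]
      ring
    omega
  -- restriction of sums to the filtered sets
  have restrict : ∀ (E : Finset (Fin d → ℝ)), (∀ x ∈ E, 0 ≤ σ x) →
      ∀ f : (Fin d → ℝ) → ℝ,
      ∑ x ∈ E.filter (fun x => 0 < σ x), α x * σ x * f x = ∑ x ∈ E, α x * σ x * f x := by
    intro E hE f
    apply Finset.sum_subset (Finset.filter_subset _ _)
    intro x hx hx'
    have h0 : ¬ (0 < σ x) := by
      intro h; exact hx' (Finset.mem_filter.mpr ⟨hx, h⟩)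
    have : σ x = 0 := le_antisymm (not_lt.mp h0) (hE x hx)
    rw [this]; ring
  have hposp : ∀ x ∈ Ep, 0 ≤ σ x := fun x hx => hpos x (Finset.mem_union_left _ hx)
  have hposm : ∀ x ∈ Em, 0 ≤ σ x := fun x hx => hpos x (Finset.mem_union_right _ hx)
  rcases Finset.eq_empty_or_nonempty Etp with hE | hne
  · exact Or.inl (Or.inl hE)
  -- S > 0
  set S := ∑ x ∈ Etp, α x * σ x with hS
  have htermpos : ∀ x ∈ Etp, 0 < α x * σ x := by
    intro x hx
    rw [hEtp, Finset.mem_filter] at hx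
    exact mul_pos (hαpos x (Finset.mem_union_left _ hx.1)) hx.2
  have hSpos : 0 < S := Finset.sum_pos htermpos hne
  have hkey0 : ∑ x ∈ Etm, α x * σ x = S := by
    have h := key 0 (by simp)
    simp only [Pi.zero_apply, pow_zero, Finset.prod_const_one, mul_one] at h
    rw [hS, hEtp, hEtm]
    have h1 := restrict Ep hposp (fun _ => 1)
    have h2 := restrict Em hposm (fun _ => 1)
    simp only [mul_one] at h1 h2
    rw [h1, h2]
    exact h.symm
  refine Or.inr ⟨fun x => α x * σ x / S, ?_, ?_, ?_, ?_⟩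
  · intro x hx
    rcases Finset.mem_union.mp hx with h | h
    · exact le_of_lt (div_pos (htermpos x h) hSpos)
    · rw [hEtm, Finset.mem_filter] at h
      have := mul_pos (hαpos x (Finset.mem_union_right _ h.1)) h.2
      exact le_of_lt (div_pos this hSpos)
  · rw [← Finset.sum_div, ← hS, div_self (ne_of_gt hSpos)]
  · rw [← Finset.sum_div, hkey0, div_self (ne_of_gt hSpos)]
  · intro e he
    have h := key e he
    have h1 := restrict Ep hposp (fun x => ∏ i, x i ^ e i)
    have h2 := restrict Em hposm (fun x => ∏ i, x i ^ e i)
    have : ∑ x ∈ Etp, α x * σ x * ∏ i, x i ^ e i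
        = ∑ x ∈ Etm, α x * σ x * ∏ i, x i ^ e i := by
      rw [hEtp, hEtm, h1, h2]; exact h
    calc ∑ x ∈ Etp, α x * σ x / S * ∏ i, x i ^ e i
        = (∑ x ∈ Etp, α x * σ x * ∏ i, x i ^ e i) / S := by
          rw [Finset.sum_div]; apply Finset.sum_congr rfl; intro x _; ring
      _ = (∑ x ∈ Etm, α x * σ x * ∏ i, x i ^ e i) / S := by rw [this]
      _ = ∑ x ∈ Etm, α x * σ x / S * ∏ i, x i ^ e i := by
          rw [Finset.sum_div]; apply Finset.sum_congr rfl; intro x _; ring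

open scoped Classical in
theorem stmt_17 (d m : ℕ) (hm : 1 ≤ m) (Ep Em : Finset (Fin d → ℝ))
    (α : (Fin d → ℝ) → ℝ) (hαpos : ∀ x ∈ Ep ∪ Em, 0 < α x)
    (hαp : ∑ x ∈ Ep, α x = 1) (hαm : ∑ x ∈ Em, α x = 1)
    (hmom : ∀ e : Fin d → ℕ, ∑ i, e i ≤ m →
      ∑ x ∈ Ep, α x * ∏ i, x i ^ e i = ∑ x ∈ Em, α x * ∏ i, x i ^ e i)
    (u : Fin d → ℝ) (a : ℝ) (σ : (Fin d → ℝ) → ℝ)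
    (hσ : ∀ x, σ x = (∑ i, u i * x i) - a)
    (hside : (∀ x ∈ Ep ∪ Em, 0 ≤ σ x) ∨ ∀ x ∈ Ep ∪ Em, σ x ≤ 0)
    (Etp Etm : Finset (Fin d → ℝ))
    (hEtp : Etp = Ep.filter (fun x => 0 < σ x) ∪ Em.filter (fun x => σ x < 0))
    (hEtm : Etm = Em.filter (fun x => 0 < σ x) ∪ Ep.filter (fun x => σ x < 0)) :
    (Etp = ∅ ∨ Etm = ∅) ∨
      ∃ β : (Fin d → ℝ) → ℝ, (∀ x ∈ Etp ∪ Etm, 0 ≤ β x) ∧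
        (∑ x ∈ Etp, β x = 1) ∧ (∑ x ∈ Etm, β x = 1) ∧
        ∀ e : Fin d → ℕ, ∑ i, e i ≤ m - 1 →
          ∑ x ∈ Etp, β x * ∏ i, x i ^ e i = ∑ x ∈ Etm, β x * ∏ i, x i ^ e i := by
  rcases hside with hside | hside
  · -- negative filters empty
    have hem : Em.filter (fun x => σ x < 0) = ∅ := by
      rw [Finset.filter_eq_empty_iff]
      intro x hx
      exact not_lt.mpr (hside x (Finset.mem_union_right _ hx))
    have hep : Ep.filter (fun x => σ x < 0) = ∅ := by
      rw [Finset.filter_eq_empty_iff]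
      intro x hx
      exact not_lt.mpr (hside x (Finset.mem_union_left _ hx))
    rw [hem, Finset.union_empty] at hEtp
    rw [hep, Finset.union_empty] at hEtm
    exact helper_17 d m hm Ep Em α hαpos hmom u a σ hσ hside Etp Etm hEtp hEtm
  · -- apply helper with roles swapped and σ negated
    have hem : Em.filter (fun x => 0 < σ x) = ∅ := by
      rw [Finset.filter_eq_empty_iff]
      intro x hx
      exact not_lt.mpr (hside x (Finset.mem_union_right _ hx))
    have hep : Ep.filter (fun x => 0 < σ x) = ∅ := by
      rw [Finset.filter_eq_empty_iff]
      intro x hx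
      exact not_lt.mpr (hside x (Finset.mem_union_left _ hx))
    rw [hem, Finset.empty_union] at hEtm
    rw [hep, Finset.empty_union] at hEtp
    have hαpos' : ∀ x ∈ Em ∪ Ep, 0 < α x := by
      intro x hx
      exact hαpos x (by rwa [Finset.union_comm])
    have hmom' : ∀ e : Fin d → ℕ, ∑ i, e i ≤ m →
        ∑ x ∈ Em, α x * ∏ i, x i ^ e i = ∑ x ∈ Ep, α x * ∏ i, x i ^ e i :=
      fun e he => (hmom e he).symm
    have hσ' : ∀ x, (-σ) x = (∑ i, (-u) i * x i) - (-a) := by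
      intro x
      simp only [Pi.neg_apply, hσ x, neg_mul]
      rw [Finset.sum_neg_distrib]
      ring
    have hpos' : ∀ x ∈ Em ∪ Ep, 0 ≤ (-σ) x := by
      intro x hx
      simp only [Pi.neg_apply, neg_nonneg]
      exact hside x (by rwa [Finset.union_comm])
    have hEtp' : Etp = Em.filter (fun x => 0 < (-σ) x) := by
      rw [hEtp]
      apply Finset.filter_congr
      intro x _
      simp [neg_pos]
    have hEtm' : Etm = Ep.filter (fun x => 0 < (-σ) x) := by
      rw [hEtm]
      apply Finset.filter_congr
      intro x _
      simp [neg_pos]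
    exact helper_17 d m hm Em Ep α hαpos' hmom' (-u) (-a) (-σ) hσ' hpos' Etp Etm hEtp' hEtm'
end

section
/- Let x_1 < x_2 < ⋯ < x_{m+2} be real numbers and define signs s_i = (−1)^i. Then there exist positive coefficients α_1,…,α_{m+2} such that ∑_{i : s_i = 1} α_i = ∑_{i : s_i = −1} α_i = 1 and for every exponent 0 ≤ e ≤ m, ∑_{i : s_i = 1} α_i x_i^e = ∑_{i : s_i = −1} α_i x_i^e. -/
open Finset Polynomial

lemma leadingCoeff_lagrange_basis {F : Type*} [Field F] {ι : Type*} [DecidableEq ι]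
    {s : Finset ι} {v : ι → F} (hvs : Set.InjOn v s) {i : ι} (hi : i ∈ s) :
    (Lagrange.basis s v i).leadingCoeff = Lagrange.nodalWeight s v i := by
  rw [Lagrange.basis, leadingCoeff_prod, Lagrange.nodalWeight]
  refine Finset.prod_congr rfl fun j hj => ?_
  obtain ⟨hji, hjs⟩ := Finset.mem_erase.mp hj
  have hne : v i ≠ v j := fun h => hji ((hvs hjs hi h.symm))
  rw [Lagrange.basisDivisor, leadingCoeff_mul, leadingCoeff_C, leadingCoeff_X_sub_C, mul_one]

lemma moment_zero (m : ℕ) (x : Fin (m + 2) → ℝ) (hx : StrictMono x) {e : ℕ} (he : e ≤ m) :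
    ∑ i, Lagrange.nodalWeight Finset.univ x i * x i ^ e = 0 := by
  classical
  have hvs : Set.InjOn x (Finset.univ : Finset (Fin (m + 2))) := hx.injective.injOn
  have hdeg : ((X : ℝ[X]) ^ e).degree < ((Finset.univ : Finset (Fin (m + 2))).card : ℕ) := by
    rw [degree_X_pow, Finset.card_univ, Fintype.card_fin]
    exact_mod_cast by omega
  have h := Lagrange.eq_interpolate (s := Finset.univ) (v := x) hvs hdeg
  have h2 := congrArg (fun p : ℝ[X] => p.coeff (m + 1)) h
  simp only [Lagrange.interpolate_apply, Polynomial.finset_sum_coeff, Polynomial.coeff_C_mul,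
    Polynomial.coeff_X_pow, Polynomial.eval_pow, Polynomial.eval_X] at h2
  have hb : ∀ i : Fin (m + 2),
      (Lagrange.basis Finset.univ x i).coeff (m + 1) = Lagrange.nodalWeight Finset.univ x i := by
    intro i
    have hnd : (Lagrange.basis Finset.univ x i).natDegree = m + 1 := by
      rw [Lagrange.natDegree_basis hvs (Finset.mem_univ i)]
      simp
    rw [← hnd, Polynomial.coeff_natDegree, leadingCoeff_lagrange_basis hvs (Finset.mem_univ i)]
  rw [if_neg (by omega)] at h2
  rw [← h2.symm]
  refine Finset.sum_congr rfl fun i _ => ?_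
  rw [hb i, mul_comm]

lemma sign_nodalWeight (m : ℕ) (x : Fin (m + 2) → ℝ) (hx : StrictMono x) (i : Fin (m + 2)) :
    0 < (-1 : ℝ) ^ (m + 1 + (i : ℕ)) * Lagrange.nodalWeight Finset.univ x i := by
  classical
  have hcard : ((Finset.univ.erase i).filter (fun j => i < j)).card = m + 1 - (i : ℕ) := by
    have hEq : (Finset.univ.erase i).filter (fun j => i < j) = Finset.Ioi i := by
      ext j
      simp only [Finset.mem_filter, Finset.mem_erase, Finset.mem_univ, and_true, Finset.mem_Ioi]
      exact ⟨fun h => h.2, fun h => ⟨h.ne', h⟩⟩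
    rw [hEq, Fin.card_Ioi]
    omega
  have key : (-1 : ℝ) ^ (m + 1 - (i : ℕ)) * Lagrange.nodalWeight Finset.univ x i
      = ∏ j ∈ Finset.univ.erase i, ((if i < j then (-1 : ℝ) else 1) * (x i - x j)⁻¹) := by
    rw [Finset.prod_mul_distrib, Lagrange.nodalWeight, Finset.prod_ite, Finset.prod_const,
      Finset.prod_const, one_pow, mul_one, hcard]
  have hpos : 0 < ∏ j ∈ Finset.univ.erase i, ((if i < j then (-1 : ℝ) else 1) * (x i - x j)⁻¹) := by
    refine Finset.prod_pos fun j hj => ?_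
    rcases lt_or_gt_of_ne (Finset.mem_erase.mp hj).1 with h | h
    · rw [if_neg (not_lt.mpr h.le), one_mul]
      exact inv_pos.mpr (sub_pos.mpr (hx h))
    · rw [if_pos h, neg_one_mul, ← inv_neg, neg_sub]
      exact inv_pos.mpr (sub_pos.mpr (hx h))
  have hi' : (i : ℕ) ≤ m + 1 := Nat.lt_succ_iff.mp i.isLt
  have hexp : m + 1 + (i : ℕ) = (m + 1 - (i : ℕ)) + 2 * (i : ℕ) := by omega
  rw [hexp, pow_add, pow_mul, neg_one_sq, one_pow, mul_one, key]
  exact hpos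

theorem stmt_18 (m : ℕ) (x : Fin (m + 2) → ℝ) (hx : StrictMono x) :
    ∃ α : Fin (m + 2) → ℝ, (∀ i, 0 < α i) ∧
      (∑ i ∈ Finset.univ.filter (fun i : Fin (m + 2) => Even (i : ℕ)), α i = 1) ∧
      (∑ i ∈ Finset.univ.filter (fun i : Fin (m + 2) => Odd (i : ℕ)), α i = 1) ∧
      ∀ e : ℕ, e ≤ m →
        ∑ i ∈ Finset.univ.filter (fun i : Fin (m + 2) => Even (i : ℕ)), α i * x i ^ e =
          ∑ i ∈ Finset.univ.filter (fun i : Fin (m + 2) => Odd (i : ℕ)), α i * x i ^ e := by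
  classical
  set w : Fin (m + 2) → ℝ := fun i => Lagrange.nodalWeight Finset.univ x i with hw
  set u : Fin (m + 2) → ℝ := fun i => (-1 : ℝ) ^ (m + 1 + (i : ℕ)) * w i with hu
  have hupos : ∀ i, 0 < u i := fun i => sign_nodalWeight m x hx i
  set c : ℝ := (-1 : ℝ) ^ (m + 1) with hc
  have hcne : c ≠ 0 := by positivity
  have hwu : ∀ i : Fin (m + 2), w i = c * (-1 : ℝ) ^ (i : ℕ) * u i := by
    intro i
    have : ((-1 : ℝ) ^ (m + 1 + (i : ℕ))) * ((-1 : ℝ) ^ (m + 1 + (i : ℕ))) = 1 := by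
      rw [← pow_add, ← two_mul, pow_mul, neg_one_sq, one_pow]
    calc w i = ((-1 : ℝ) ^ (m + 1 + (i : ℕ)) * (-1 : ℝ) ^ (m + 1 + (i : ℕ))) * w i := by
          rw [this, one_mul]
      _ = c * (-1 : ℝ) ^ (i : ℕ) * u i := by rw [hu, hc, pow_add]; ring
  set E := Finset.univ.filter (fun i : Fin (m + 2) => Even (i : ℕ)) with hE
  set O := Finset.univ.filter (fun i : Fin (m + 2) => Odd (i : ℕ)) with hO
  -- key: difference of weighted sums of u is c⁻¹ times total sum of w
  have hkey : ∀ e : ℕ, e ≤ m →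
      ∑ i ∈ E, u i * x i ^ e = ∑ i ∈ O, u i * x i ^ e := by
    intro e he
    have hsplit : ∑ i ∈ E, w i * x i ^ e + ∑ i ∈ O, w i * x i ^ e
        = ∑ i, w i * x i ^ e := by
      rw [hE, hO]
      rw [← Finset.sum_filter_add_sum_filter_not Finset.univ
        (fun i : Fin (m + 2) => Even (i : ℕ)) (fun i => w i * x i ^ e)]
      congr 1
      apply Finset.sum_congr _ (fun _ _ => rfl)
      ext j
      simp [Nat.not_even_iff_odd]
    have hEsum : ∑ i ∈ E, w i * x i ^ e = c * ∑ i ∈ E, u i * x i ^ e := by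
      rw [Finset.mul_sum]
      refine Finset.sum_congr rfl fun i hi => ?_
      have hev : Even (i : ℕ) := (Finset.mem_filter.mp hi).2
      rw [hwu i, hev.neg_one_pow]
      ring
    have hOsum : ∑ i ∈ O, w i * x i ^ e = -c * ∑ i ∈ O, u i * x i ^ e := by
      rw [Finset.mul_sum]
      refine Finset.sum_congr rfl fun i hi => ?_
      have hod : Odd (i : ℕ) := (Finset.mem_filter.mp hi).2
      rw [hwu i, hod.neg_one_pow]
      ring
    have hzero := moment_zero m x hx he
    rw [← hsplit, hEsum, hOsum] at hzero
    have : c * (∑ i ∈ E, u i * x i ^ e - ∑ i ∈ O, u i * x i ^ e) = 0 := by linarith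
    have := (mul_eq_zero.mp this).resolve_left hcne
    linarith
  set S : ℝ := ∑ i ∈ E, u i with hS
  have hSpos : 0 < S := by
    refine Finset.sum_pos (fun i _ => hupos i) ?_
    exact ⟨0, by simp [hE]⟩
  have hOS : ∑ i ∈ O, u i = S := by
    have := hkey 0 (Nat.zero_le m)
    simpa [pow_zero, mul_one] using this.symm
  refine ⟨fun i => u i / S, fun i => div_pos (hupos i) hSpos, ?_, ?_, ?_⟩
  · rw [← Finset.sum_div, ← hS, div_self hSpos.ne']
  · rw [← Finset.sum_div, hOS, div_self hSpos.ne']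
  · intro e he
    have := hkey e he
    calc ∑ i ∈ E, u i / S * x i ^ e = (∑ i ∈ E, u i * x i ^ e) / S := by
          rw [Finset.sum_div]; exact Finset.sum_congr rfl fun i _ => by ring
      _ = (∑ i ∈ O, u i * x i ^ e) / S := by rw [this]
      _ = ∑ i ∈ O, u i / S * x i ^ e := by
          rw [Finset.sum_div]; exact Finset.sum_congr rfl fun i _ => by ring
end
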